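/- Define M_n^k(x) = (Σ_{j=0}^{n} C(n,j) C_{k,n}(j) x_0^j \underline x^{n−j}) P_k(\underline x) with C_{k,n}(j) = (n−j)! / ∏_{s=0}^{n−j} β_k(s). Then each M_n^k is monogenic in ℝ^{m+1} and the Appell condition (1/2)\overline∂_x M_n^k = n M_{n−1}^k holds for all n ≥ 1, with M_0^k = P_k. -/

import Mathlib

open Finset

variable {m : ℕ} {A : Type*} [NormedRing A] [NormedAlgebra ℝ A]

/-- The Dirac operator ∂_{\underline x} = Σ_j e_j ∂_{x_j} on A-valued functions on ℝ^m,
where `e : Fin m → A` are the Clifford generators acting by left multiplication. -/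
noncomputable def Dirac (e : Fin m → A) (f : EuclideanSpace ℝ (Fin m) → A)
    (x : EuclideanSpace ℝ (Fin m)) : A :=
  ∑ j, e j * fderiv ℝ f x (EuclideanSpace.single j 1)

/-- The generalized Cauchy–Riemann operator ∂_x = ∂_{x_0} + Σ_j e_j ∂_{x_j}
on A-valued functions on ℝ^{m+1} = ℝ × ℝ^m. -/
noncomputable def CR (e : Fin m → A) (f : ℝ × EuclideanSpace ℝ (Fin m) → A)
    (p : ℝ × EuclideanSpace ℝ (Fin m)) : A :=
  fderiv ℝ f p (1, 0) + ∑ j, e j * fderiv ℝ f p (0, EuclideanSpace.single j 1)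

/-- The conjugate Cauchy–Riemann operator \overline∂_x = ∂_{x_0} − Σ_j e_j ∂_{x_j}. -/
noncomputable def CRbar (e : Fin m → A) (f : ℝ × EuclideanSpace ℝ (Fin m) → A)
    (p : ℝ × EuclideanSpace ℝ (Fin m)) : A :=
  fderiv ℝ f p (1, 0) - ∑ j, e j * fderiv ℝ f p (0, EuclideanSpace.single j 1)

/-- The Laplacian Δ = Σ_{j=0}^m ∂_{x_j}² on ℝ^{m+1} = ℝ × ℝ^m. -/
noncomputable def Lap (f : ℝ × EuclideanSpace ℝ (Fin m) → A)
    (p : ℝ × EuclideanSpace ℝ (Fin m)) : A :=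
  fderiv ℝ (fun q => fderiv ℝ f q (1, 0)) p (1, 0) +
    ∑ j, fderiv ℝ (fun q => fderiv ℝ f q (0, EuclideanSpace.single j 1)) p
      (0, EuclideanSpace.single j 1)

/-- The Clifford vector \underline x = Σ_j x_j e_j associated to x ∈ ℝ^m. -/
noncomputable def vec (e : Fin m → A) (x : EuclideanSpace ℝ (Fin m)) : A :=
  ∑ j, x j • e j

/-- g : ℝ^m → A is a polynomial map of degree at most d. -/
def IsPolyDeg (d : ℕ) (g : EuclideanSpace ℝ (Fin m) → A) : Prop :=
  ∃ (S : Finset (Fin m →₀ ℕ)) (c : (Fin m →₀ ℕ) → A),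
    (∀ α ∈ S, (α.sum fun _ n => n) ≤ d) ∧
    ∀ x, g x = ∑ α ∈ S, (∏ j, x j ^ α j) • c α

/-- β_k(0)=1, β_k(s)=s for even s ≥ 1, β_k(s)=2k+m+s−1 for odd s. -/
noncomputable def betak (m k : ℕ) (n : ℕ) : ℝ :=
  if n = 0 then 1 else if Even n then (n : ℝ) else (2 * k + m + n - 1 : ℝ)

/-- C_{k,n}(j) = (n−j)! / ∏_{s=0}^{n−j} β_k(s). -/
noncomputable def Ckn (m k n j : ℕ) : ℝ :=
  ((n - j).factorial : ℝ) / ∏ s ∈ Finset.range (n - j + 1), betak m k s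

/-- M_n^k(x) = (Σ_{j=0}^{n} C(n,j) C_{k,n}(j) x_0^j \underline x^{n−j}) P_k(\underline x). -/
noncomputable def Mnk (e : Fin m → A) (k : ℕ) (P : EuclideanSpace ℝ (Fin m) → A)
    (n : ℕ) (p : ℝ × EuclideanSpace ℝ (Fin m)) : A :=
  (∑ j ∈ Finset.range (n + 1),
    ((n.choose j : ℝ) * Ckn m k n j) • (p.1 ^ j • vec e p.2 ^ (n - j))) * P p.2

noncomputable def vecL (e : Fin m → A) : EuclideanSpace ℝ (Fin m) →L[ℝ] A :=
  ∑ j, (EuclideanSpace.proj j : EuclideanSpace ℝ (Fin m) →L[ℝ] ℝ).smulRight (e j)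

lemma vecL_apply (e : Fin m → A) (x) : vecL e x = vec e x := by
  simp [vecL, vec, ContinuousLinearMap.sum_apply]

lemma vec_eq (e : Fin m → A) : vec e = ⇑(vecL e) := funext fun x => (vecL_apply e x).symm

lemma hasFDerivAt_vec (e : Fin m → A) (x) : HasFDerivAt (vec e) (vecL e) x := by
  rw [vec_eq]; exact (vecL e).hasFDerivAt

lemma vecL_single (e : Fin m → A) (i : Fin m) : vecL e (EuclideanSpace.single i 1) = e i := by
  rw [vecL_apply]
  simp [vec, EuclideanSpace.single_apply, ite_smul]

lemma sum_single (x : EuclideanSpace ℝ (Fin m)) :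
    ∑ i, x i • EuclideanSpace.single i (1:ℝ) = x := by
  have := (EuclideanSpace.basisFun (Fin m) ℝ).sum_repr x
  simpa [EuclideanSpace.basisFun_apply, EuclideanSpace.basisFun_repr] using this

lemma poly_diff {d : ℕ} {P : EuclideanSpace ℝ (Fin m) → A} (h : IsPolyDeg d P) :
    Differentiable ℝ P := by
  obtain ⟨S, c, -, hg⟩ := h
  have : P = fun x => ∑ α ∈ S, (∏ j, x j ^ α j) • c α := funext hg
  rw [this]
  apply Differentiable.fun_sum
  intro α _
  intro x
  apply DifferentiableAt.smul_const
  exact (HasFDerivAt.finset_prod (fun j (_ : j ∈ Finset.univ) =>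
    (hasDerivAt_pow (α j) (x j)).comp_hasFDerivAt x
      (EuclideanSpace.proj (𝕜 := ℝ) j).hasFDerivAt)).differentiableAt


noncomputable def gamk (m k : ℕ) (s : ℕ) : ℝ := if s = 0 then 0 else betak m k s

lemma gam_rec (k : ℕ) (s : ℕ) :
    gamk m k (s + 1) = (m : ℝ) + 2 * ((s : ℝ) + k) - gamk m k s := by
  rcases Nat.eq_zero_or_pos s with hs | hs
  · subst hs
    simp [gamk, betak]
    push_cast
    ring
  rcases Nat.even_or_odd s with hev | hod
  · have h1 : ¬ Even (s + 1) := by simp [Nat.even_add_one, hev]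
    simp only [gamk, betak, Nat.succ_ne_zero, if_false, h1, hev, if_true, hs.ne', ite_false]
    push_cast
    ring
  · have h1 : Even (s + 1) := by simp [Nat.even_add_one, Nat.not_even_iff_odd.mpr hod]
    have h2 : ¬ Even s := Nat.not_even_iff_odd.mpr hod
    simp only [gamk, betak, Nat.succ_ne_zero, if_false, h1, h2, if_true, hs.ne', ite_false]
    push_cast
    ring

lemma e_mul_vec (e : Fin m → A) (he : ∀ j, e j * e j = -1)
    (hanti : ∀ j k, j ≠ k → e j * e k = -(e k * e j)) (i : Fin m)
    (x : EuclideanSpace ℝ (Fin m)) :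
    e i * vec e x = -(vec e x * e i) - (2 * x i) • (1 : A) := by
  have h1 : e i * vec e x + vec e x * e i = (-(2 * x i)) • (1 : A) := by
    rw [vec, Finset.mul_sum, Finset.sum_mul, ← Finset.sum_add_distrib]
    calc ∑ j, (e i * (x j • e j) + (x j • e j) * e i)
        = ∑ j, (if j = i then (-(2 * x i)) • (1:A) else 0) := by
          refine Finset.sum_congr rfl fun j _ => ?_
          by_cases h : j = i
          · subst h
            rw [mul_smul_comm, smul_mul_assoc, he j, if_pos rfl]
            module
          · rw [mul_smul_comm, smul_mul_assoc, hanti j i h, if_neg h]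
            module
      _ = (-(2 * x i)) • (1:A) := by simp
  have h2 := eq_sub_of_add_eq h1
  rw [h2, neg_smul]
  abel

-- Euler identity
lemma euler_P {k : ℕ} {P : EuclideanSpace ℝ (Fin m) → A} (hPdiff : Differentiable ℝ P)
    (hhom : ∀ (t : ℝ) (x : EuclideanSpace ℝ (Fin m)), P (t • x) = t ^ k • P x)
    (x : EuclideanSpace ℝ (Fin m)) :
    ∑ i, x i • fderiv ℝ P x (EuclideanSpace.single i 1) = (k : ℝ) • P x := by
  have hL : HasFDerivAt (fun t : ℝ => t • x)
      ((ContinuousLinearMap.id ℝ ℝ).smulRight x) 1 :=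
    ((ContinuousLinearMap.id ℝ ℝ).smulRight x).hasFDerivAt
  have hP1 : HasFDerivAt P (fderiv ℝ P x) (((ContinuousLinearMap.id ℝ ℝ).smulRight x) 1) := by
    simpa using (hPdiff x).hasFDerivAt
  have h1 : HasFDerivAt (fun t : ℝ => P (t • x))
      ((fderiv ℝ P x).comp ((ContinuousLinearMap.id ℝ ℝ).smulRight x)) 1 := hP1.comp 1 hL
  have h2 : HasFDerivAt (fun t : ℝ => t ^ k • P x)
      (ContinuousLinearMap.smulRight (1 : ℝ →L[ℝ] ℝ) (((k:ℝ) * 1 ^ (k-1)) • P x)) 1 :=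
    ((hasDerivAt_pow k 1).smul_const (P x)).hasFDerivAt
  have heq : (fun t : ℝ => P (t • x)) = fun t : ℝ => t ^ k • P x := funext fun t => hhom t x
  rw [heq] at h1
  have := h1.unique h2
  have happ := DFunLike.congr_fun this (1:ℝ)
  simp only [ContinuousLinearMap.coe_comp', Function.comp_apply,
    ContinuousLinearMap.smulRight_apply, ContinuousLinearMap.coe_id',
    ContinuousLinearMap.one_apply, id_eq, one_smul, one_pow, mul_one] at happ
  -- happ : fderiv ℝ P x (1 • x) = (k:ℝ) • P x  (roughly)
  calc ∑ i, x i • fderiv ℝ P x (EuclideanSpace.single i 1)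
      = fderiv ℝ P x (∑ i, x i • EuclideanSpace.single i (1:ℝ)) := by
        rw [map_sum]; simp [map_smul]
    _ = (k:ℝ) • P x := by rw [sum_single, happ]


section W
variable (e : Fin m → A) (k : ℕ) (P : EuclideanSpace ℝ (Fin m) → A)
  (hPdiff : Differentiable ℝ P)
include hPdiff

lemma W_diff (s : ℕ) : Differentiable ℝ (fun x => vec e x ^ s * P x) := by
  have h : Differentiable ℝ (vec e) := by rw [vec_eq]; exact (vecL e).differentiable
  exact (h.pow s).mul hPdiff

lemma pdW_succ (s : ℕ) (x : EuclideanSpace ℝ (Fin m)) (i : Fin m) :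
    fderiv ℝ (fun x => vec e x ^ (s+1) * P x) x (EuclideanSpace.single i 1)
      = e i * (vec e x ^ s * P x)
        + vec e x * fderiv ℝ (fun x => vec e x ^ s * P x) x (EuclideanSpace.single i 1) := by
  have hW : HasFDerivAt (fun x => vec e x ^ s * P x)
      (fderiv ℝ (fun x => vec e x ^ s * P x) x) x := (W_diff e P hPdiff s x).hasFDerivAt
  have h : HasFDerivAt (fun y => vec e y * (vec e y ^ s * P y)) _ x := (hasFDerivAt_vec e x).mul' hW
  have heq : (fun y => vec e y * (vec e y ^ s * P y)) = fun y => vec e y ^ (s+1) * P y := by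
    funext y
    rw [← mul_assoc, ← pow_succ']
  rw [heq] at h
  rw [h.fderiv]
  simp only [ContinuousLinearMap.add_apply, ContinuousLinearMap.smul_apply,
    ContinuousLinearMap.smulRight_apply, vecL_single, smul_eq_mul, MulOpposite.smul_eq_mul_unop,
    MulOpposite.unop_op]
  rw [add_comm]

lemma euler_W (hEulerP : ∀ x, ∑ i, x i • fderiv ℝ P x (EuclideanSpace.single i 1) = (k:ℝ) • P x)
    (s : ℕ) (x : EuclideanSpace ℝ (Fin m)) :
    ∑ i, x i • fderiv ℝ (fun x => vec e x ^ s * P x) x (EuclideanSpace.single i 1)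
      = ((s : ℝ) + k) • (vec e x ^ s * P x) := by
  induction s generalizing x with
  | zero =>
    have heq : (fun x => vec e x ^ 0 * P x) = P := by funext y; rw [pow_zero, one_mul]
    rw [heq]
    rw [hEulerP x]
    norm_num
  | succ s ih =>
    calc ∑ i, x i • fderiv ℝ (fun x => vec e x ^ (s+1) * P x) x (EuclideanSpace.single i 1)
        = ∑ i, (x i • (e i * (vec e x ^ s * P x))
            + x i • (vec e x * fderiv ℝ (fun x => vec e x ^ s * P x) x
              (EuclideanSpace.single i 1))) := by
          refine Finset.sum_congr rfl fun i _ => ?_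
          rw [pdW_succ e P hPdiff, smul_add]
      _ = (∑ i, x i • e i) * (vec e x ^ s * P x)
          + vec e x * ∑ i, x i • fderiv ℝ (fun x => vec e x ^ s * P x) x
              (EuclideanSpace.single i 1) := by
          rw [Finset.sum_add_distrib, Finset.sum_mul, Finset.mul_sum]
          simp only [smul_mul_assoc, mul_smul_comm]
      _ = vec e x ^ (s+1) * P x + ((s : ℝ) + k) • (vec e x ^ (s+1) * P x) := by
          rw [← vec, ih x, mul_smul_comm, ← mul_assoc, ← pow_succ']
      _ = (((s+1 : ℕ) : ℝ) + k) • (vec e x ^ (s+1) * P x) := by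
          push_cast
          module

lemma dirac_W (he : ∀ j, e j * e j = -1)
    (hanti : ∀ j k, j ≠ k → e j * e k = -(e k * e j))
    (hEulerP : ∀ x, ∑ i, x i • fderiv ℝ P x (EuclideanSpace.single i 1) = (k:ℝ) • P x)
    (hDiracP : ∀ x, ∑ i, e i * fderiv ℝ P x (EuclideanSpace.single i 1) = 0)
    (s : ℕ) (x : EuclideanSpace ℝ (Fin m)) :
    ∑ i, e i * fderiv ℝ (fun x => vec e x ^ s * P x) x (EuclideanSpace.single i 1)
      = (-(gamk m k s)) • (vec e x ^ (s-1) * P x) := by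
  induction s generalizing x with
  | zero =>
    have heq : (fun x => vec e x ^ 0 * P x) = P := by funext y; rw [pow_zero, one_mul]
    rw [heq, hDiracP x]
    simp [gamk]
  | succ s ih =>
    calc ∑ i, e i * fderiv ℝ (fun x => vec e x ^ (s+1) * P x) x (EuclideanSpace.single i 1)
        = ∑ i, ((e i * e i) * (vec e x ^ s * P x)
            + (e i * vec e x) * fderiv ℝ (fun x => vec e x ^ s * P x) x
              (EuclideanSpace.single i 1)) := by
          refine Finset.sum_congr rfl fun i _ => ?_
          rw [pdW_succ e P hPdiff, mul_add, mul_assoc, mul_assoc]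
      _ = ∑ i, ((-(1:ℝ)) • (vec e x ^ s * P x)
            + (-(vec e x * (e i * fderiv ℝ (fun x => vec e x ^ s * P x) x
                (EuclideanSpace.single i 1)))
              - (2:ℝ) • (x i • fderiv ℝ (fun x => vec e x ^ s * P x) x
                (EuclideanSpace.single i 1)))) := by
          refine Finset.sum_congr rfl fun i _ => ?_
          rw [he i, e_mul_vec e he hanti i x, sub_mul]
          simp only [neg_mul, mul_assoc, smul_mul_assoc, one_mul]
          module
      _ = (-(m:ℝ)) • (vec e x ^ s * P x)
          - vec e x * (∑ i, e i * fderiv ℝ (fun x => vec e x ^ s * P x) x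
              (EuclideanSpace.single i 1))
          - (2:ℝ) • (∑ i, x i • fderiv ℝ (fun x => vec e x ^ s * P x) x
              (EuclideanSpace.single i 1)) := by
          rw [Finset.sum_add_distrib, Finset.sum_sub_distrib, Finset.sum_neg_distrib,
            ← Finset.mul_sum, ← Finset.smul_sum]
          rw [Finset.sum_const, Finset.card_univ, Fintype.card_fin,
            ← Nat.cast_smul_eq_nsmul ℝ, ← Finset.smul_sum]
          module
      _ = (-(m:ℝ)) • (vec e x ^ s * P x)
          - (-(gamk m k s)) • (vec e x * (vec e x ^ (s-1) * P x))
          - (2:ℝ) • (((s : ℝ) + k) • (vec e x ^ s * P x)) := by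
          rw [ih x, euler_W e k P hPdiff hEulerP s x, mul_smul_comm]
      _ = (-(gamk m k (s+1))) • (vec e x ^ ((s+1)-1) * P x) := by
          rw [gam_rec k s]
          rcases Nat.eq_zero_or_pos s with hs | hs
          · subst hs
            simp only [gamk, if_pos rfl]
            push_cast
            module
          · obtain ⟨t, rfl⟩ := Nat.exists_eq_add_of_le hs
            have h1 : vec e x * (vec e x ^ ((1 + t) - 1) * P x) = vec e x ^ (1+t) * P x := by
              rw [← mul_assoc, ← pow_succ']
              congr 2
              omega
            rw [h1]
            simp only [Nat.add_sub_cancel]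
            module

end W


lemma betak_pos (k : ℕ) (hkm : 1 ≤ 2 * k + m) (s : ℕ) : 0 < betak m k s := by
  unfold betak
  rcases eq_or_ne s 0 with rfl | h
  · simp
  by_cases hev : Even s
  · simp only [h, if_false, hev, if_true]
    exact_mod_cast Nat.pos_of_ne_zero h
  · simp only [h, if_false, hev]
    have h1 : 1 ≤ s := Nat.one_le_iff_ne_zero.mpr h
    have h2 : (1:ℝ) ≤ 2 * k + m := by exact_mod_cast hkm
    have h3 : (1:ℝ) ≤ s := by exact_mod_cast h1
    push_cast
    linarith

lemma prodbeta_pos (k : ℕ) (hkm : 1 ≤ 2 * k + m) (t : ℕ) :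
    0 < ∏ s ∈ Finset.range t, betak m k s :=
  Finset.prod_pos fun s _ => betak_pos k hkm s

lemma Ckn_mul_beta (k : ℕ) (hkm : 1 ≤ 2 * k + m) (n j : ℕ) :
    Ckn m k n j * betak m k (n - j)
      = ((n-j).factorial : ℝ) / ∏ s ∈ Finset.range (n-j), betak m k s := by
  have hb : betak m k (n-j) ≠ 0 := (betak_pos k hkm _).ne'
  have hQ : (∏ s ∈ Finset.range (n-j), betak m k s) ≠ 0 := (prodbeta_pos k hkm _).ne'
  rw [Ckn, Finset.prod_range_succ]
  field_simp

lemma key1 (k : ℕ) (hkm : 1 ≤ 2 * k + m) (n j : ℕ) (hj : j < n) :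
    (n.choose (j+1) : ℝ) * Ckn m k n (j+1) * ((j:ℝ)+1)
      = (n.choose j : ℝ) * Ckn m k n j * betak m k (n-j) := by
  obtain ⟨d, hd⟩ : ∃ d, n - j = d + 1 := ⟨n - j - 1, by omega⟩
  have h2 : n - (j+1) = d := by omega
  have hch : (n.choose (j+1) : ℝ) * ((j:ℝ)+1) = (n.choose j : ℝ) * ((d:ℝ)+1) := by
    have h := Nat.choose_succ_right_eq n j
    rw [hd] at h
    exact_mod_cast h
  have hfac : (((d+1)).factorial : ℝ) = ((d:ℝ)+1) * (d.factorial : ℝ) := by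
    rw [Nat.factorial_succ]; push_cast; ring
  conv_rhs => rw [mul_assoc, Ckn_mul_beta k hkm, hd]
  rw [Ckn, h2, hfac]
  have hQ : (∏ s ∈ Finset.range (d+1), betak m k s) ≠ 0 := (prodbeta_pos k hkm _).ne'
  field_simp
  linear_combination hch

lemma key2 (k : ℕ) (hkm : 1 ≤ 2 * k + m) (n j : ℕ) (hj : j < n) :
    (n.choose j : ℝ) * Ckn m k n j * betak m k (n-j)
      = (n:ℝ) * (((n-1).choose j : ℝ) * Ckn m k (n-1) j) := by
  obtain ⟨d, hd⟩ : ∃ d, n - j = d + 1 := ⟨n - j - 1, by omega⟩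
  have h2 : (n-1) - j = d := by omega
  have hch : (n:ℝ) * ((n-1).choose j : ℝ) = (n.choose j : ℝ) * ((d:ℝ)+1) := by
    have h1 := Nat.add_one_mul_choose_eq (n-1) j
    have hn : n - 1 + 1 = n := by omega
    rw [hn] at h1
    have h3 := Nat.choose_succ_right_eq n j
    rw [hd] at h3
    have h4 : n * (n-1).choose j = n.choose j * (d+1) := by rw [h1, h3]
    exact_mod_cast h4
  have hfac : (((d+1)).factorial : ℝ) = ((d:ℝ)+1) * (d.factorial : ℝ) := by
    rw [Nat.factorial_succ]; push_cast; ring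
  conv_lhs => rw [mul_assoc, Ckn_mul_beta k hkm, hd]
  rw [Ckn, h2, hfac]
  have hQ : (∏ s ∈ Finset.range (d+1), betak m k s) ≠ 0 := (prodbeta_pos k hkm _).ne'
  field_simp
  linear_combination (-1 : ℝ) * hch


/-- each M_n^k is monogenic in ℝ^{m+1}, M_0^k = P_k, and the Appell
condition (1/2)\overline∂_x M_n^k = n M_{n−1}^k holds for n ≥ 1. -/
theorem stmt14 (e : Fin m → A)
    (he : ∀ j, e j * e j = -1)
    (hanti : ∀ j k, j ≠ k → e j * e k = -(e k * e j))
    (k : ℕ) (hkm : 1 ≤ 2 * k + m)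
    (P : EuclideanSpace ℝ (Fin m) → A)
    (hPpoly : IsPolyDeg k P)
    (hhom : ∀ (t : ℝ) (x : EuclideanSpace ℝ (Fin m)), P (t • x) = t ^ k • P x)
    (hmono : ∀ x, Dirac e P x = 0) :
    (∀ p, Mnk e k P 0 p = P p.2) ∧
    (∀ n p, CR e (Mnk e k P n) p = 0) ∧
    (∀ n : ℕ, 1 ≤ n → ∀ p,
      (1 / 2 : ℝ) • CRbar e (Mnk e k P n) p = (n : ℝ) • Mnk e k P (n - 1) p) := by
  classical
  have hPdiff : Differentiable ℝ P := poly_diff hPpoly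
  have hEulerP := euler_P hPdiff hhom
  have hDiracP : ∀ x, ∑ i, e i * fderiv ℝ P x (EuclideanSpace.single i 1) = 0 := by
    intro x
    have := hmono x
    rwa [Dirac] at this
  have hW := W_diff e P hPdiff
  have hMeq : ∀ (n : ℕ), Mnk e k P n = fun q : ℝ × EuclideanSpace ℝ (Fin m) =>
      ∑ j ∈ Finset.range (n+1),
        ((n.choose j : ℝ) * Ckn m k n j) • (q.1 ^ j • (vec e q.2 ^ (n-j) * P q.2)) := by
    intro n
    funext q
    rw [Mnk, Finset.sum_mul]
    exact Finset.sum_congr rfl fun j _ => by rw [smul_mul_assoc, smul_mul_assoc]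
  have hM : ∀ (n : ℕ) (p : ℝ × EuclideanSpace ℝ (Fin m)) (v : ℝ × EuclideanSpace ℝ (Fin m)),
      fderiv ℝ (Mnk e k P n) p v
        = ∑ j ∈ Finset.range (n+1), ((n.choose j : ℝ) * Ckn m k n j) •
            ((p.1 ^ j) • fderiv ℝ (fun x => vec e x ^ (n-j) * P x) p.2 v.2
              + (((j:ℝ) * p.1^(j-1)) * v.1) • (vec e p.2 ^ (n-j) * P p.2)) := by
    intro n p v
    have hT : ∀ j : ℕ, j ∈ Finset.range (n+1) → HasFDerivAt
        (fun q : ℝ × EuclideanSpace ℝ (Fin m) =>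
          ((n.choose j : ℝ) * Ckn m k n j) • (q.1 ^ j • (vec e q.2 ^ (n-j) * P q.2)))
        (((n.choose j : ℝ) * Ckn m k n j) •
          ((p.1 ^ j) • ((fderiv ℝ (fun x => vec e x ^ (n-j) * P x) p.2).comp
              (ContinuousLinearMap.snd ℝ ℝ (EuclideanSpace ℝ (Fin m))))
            + (((j:ℝ) * p.1^(j-1)) • ContinuousLinearMap.fst ℝ ℝ
                (EuclideanSpace ℝ (Fin m))).smulRight
                (vec e p.2 ^ (n-j) * P p.2))) p := by
      intro j _
      refine HasFDerivAt.const_smul ?_ ((n.choose j : ℝ) * Ckn m k n j)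
      have hc : HasFDerivAt (fun q : ℝ × EuclideanSpace ℝ (Fin m) => q.1 ^ j)
          (((j:ℝ) * p.1^(j-1)) • ContinuousLinearMap.fst ℝ ℝ (EuclideanSpace ℝ (Fin m))) p := by
        simpa [Function.comp_def] using
          (hasDerivAt_pow j p.1).comp_hasFDerivAt p hasFDerivAt_fst
      have hf : HasFDerivAt (fun q : ℝ × EuclideanSpace ℝ (Fin m) => vec e q.2 ^ (n-j) * P q.2)
          ((fderiv ℝ (fun x => vec e x ^ (n-j) * P x) p.2).comp
            (ContinuousLinearMap.snd ℝ ℝ (EuclideanSpace ℝ (Fin m)))) p :=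
        ((hW (n-j) p.2).hasFDerivAt).comp p hasFDerivAt_snd
      exact hc.smul hf
    have hsum := HasFDerivAt.fun_sum hT
    rw [hMeq n, hsum.fderiv]
    simp only [ContinuousLinearMap.coe_sum', Finset.sum_apply,
      ContinuousLinearMap.add_apply, ContinuousLinearMap.smul_apply,
      ContinuousLinearMap.coe_comp', Function.comp_apply,
      ContinuousLinearMap.smulRight_apply, ContinuousLinearMap.coe_fst',
      ContinuousLinearMap.coe_snd', smul_eq_mul]
  have hMval : ∀ (n : ℕ) p, Mnk e k P n p
      = ∑ j ∈ Finset.range (n+1),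
        ((n.choose j : ℝ) * Ckn m k n j) • (p.1 ^ j • (vec e p.2 ^ (n-j) * P p.2)) := by
    intro n p
    rw [hMeq n]
  have hA : ∀ (n : ℕ) (p : ℝ × EuclideanSpace ℝ (Fin m)),
      fderiv ℝ (Mnk e k P n) p (1, 0)
        = ∑ j ∈ Finset.range (n+1),
            (((n.choose j:ℝ) * Ckn m k n j) * ((j:ℝ) * p.1^(j-1))) •
              (vec e p.2 ^ (n-j) * P p.2) := by
    intro n p
    rw [hM n p (1, 0)]
    refine Finset.sum_congr rfl fun j _ => ?_
    simp only [map_zero, smul_zero, zero_add, mul_one]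
    rw [smul_smul]
  have hB : ∀ (n : ℕ) (p : ℝ × EuclideanSpace ℝ (Fin m)),
      ∑ i, e i * fderiv ℝ (Mnk e k P n) p (0, EuclideanSpace.single i 1)
        = -∑ j ∈ Finset.range (n+1),
            ((((n.choose j:ℝ) * Ckn m k n j) * gamk m k (n-j)) * p.1^j) •
              (vec e p.2 ^ (n-j-1) * P p.2) := by
    intro n p
    calc ∑ i, e i * fderiv ℝ (Mnk e k P n) p (0, EuclideanSpace.single i 1)
        = ∑ i, ∑ j ∈ Finset.range (n+1), ((n.choose j : ℝ) * Ckn m k n j) •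
            ((p.1 ^ j) • (e i * fderiv ℝ (fun x => vec e x ^ (n-j) * P x) p.2
              (EuclideanSpace.single i 1))) := by
          refine Finset.sum_congr rfl fun i _ => ?_
          rw [hM n p (0, EuclideanSpace.single i 1), Finset.mul_sum]
          refine Finset.sum_congr rfl fun j _ => ?_
          simp only [mul_zero, zero_smul, add_zero]
          rw [mul_smul_comm, mul_smul_comm]
      _ = ∑ j ∈ Finset.range (n+1), ((n.choose j : ℝ) * Ckn m k n j) •
            ((p.1 ^ j) • (∑ i, e i * fderiv ℝ (fun x => vec e x ^ (n-j) * P x) p.2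
              (EuclideanSpace.single i 1))) := by
          rw [Finset.sum_comm]
          refine Finset.sum_congr rfl fun j _ => ?_
          rw [← Finset.smul_sum, ← Finset.smul_sum]
      _ = _ := by
          rw [← Finset.sum_neg_distrib]
          refine Finset.sum_congr rfl fun j _ => ?_
          rw [dirac_W e k P hPdiff he hanti hEulerP hDiracP (n-j) p.2]
          module
  have hgam0 : gamk m k 0 = 0 := by simp [gamk]
  refine ⟨?_, ?_, ?_⟩
  · -- part 1
    intro p
    rw [hMval 0 p]
    simp [Ckn, betak]
  · -- part 2
    intro n p
    rw [CR, hA n p, hB n p, ← sub_eq_add_neg,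
      Finset.sum_range_succ' _ n, Finset.sum_range_succ _ n]
    simp only [Nat.cast_zero, zero_mul, mul_zero, zero_smul, add_zero, Nat.sub_self,
      hgam0, neg_zero, Nat.sub_sub, Nat.add_sub_cancel]
    rw [← Finset.sum_sub_distrib]
    refine Finset.sum_eq_zero fun j hj => ?_
    rw [Finset.mem_range] at hj
    have hg : gamk m k (n - j) = betak m k (n - j) := by
      rw [gamk, if_neg (by omega)]
    have hk1 := key1 k hkm n j hj
    rw [hg, ← sub_smul]
    have hcoef : (↑(n.choose (j+1)) * Ckn m k n (j+1)) * ((((j+1):ℕ):ℝ) * p.1 ^ j)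
        - (↑(n.choose j) * Ckn m k n j * betak m k (n-j)) * p.1 ^ j = 0 := by
      push_cast
      linear_combination p.1 ^ j * hk1
    push_cast
    push_cast at hcoef
    rw [hcoef, zero_smul]
  · -- part 3
    intro n hn p
    obtain ⟨t, rfl⟩ : ∃ t, n = t + 1 := ⟨n - 1, by omega⟩
    rw [CRbar, hA _ p, hB _ p, sub_neg_eq_add,
      Finset.sum_range_succ' _ (t+1), Finset.sum_range_succ _ (t+1)]
    simp only [Nat.cast_zero, zero_mul, mul_zero, zero_smul, add_zero, Nat.sub_self,
      hgam0, neg_zero, Nat.sub_sub, Nat.add_sub_cancel, Nat.succ_sub_succ_eq_sub,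
      Nat.sub_zero]
    rw [← Finset.sum_add_distrib, hMval t p, Finset.smul_sum, Finset.smul_sum]
    refine Finset.sum_congr rfl fun j hj => ?_
    rw [Finset.mem_range] at hj
    have hj' : j < t + 1 := hj
    have hg : gamk m k (t + 1 - j) = betak m k (t + 1 - j) := by
      rw [gamk, if_neg (by omega)]
    have hk1 := key1 k hkm (t+1) j hj'
    have hk2 := key2 k hkm (t+1) j hj'
    simp only [Nat.add_sub_cancel] at hk2
    rw [hg, ← add_smul, smul_smul, smul_smul, smul_smul]
    congr 1
    push_cast
    push_cast at hk1 hk2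
    linear_combination (p.1 ^ j / 2) * hk1 + p.1 ^ j * hk2
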